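/- Let S be a string of length n ≥ 1 and let m be the number of maximal blocks of consecutive 1s (runs of 1s) in the OC array of S. Then m ≤ 2·√n + 2; in particular, the number of runs in the OC array of a string of length n is O(√n). -/

import Mathlib

variable {α : Type*}

/-- `β` is a border of `S`: a proper (possibly empty) prefix that is also a suffix. -/
def IsBorder (β S : List α) : Prop :=
  β ≠ S ∧ β <+: S ∧ β <:+ S

/-- `v` occurs in `T` at (0-based) position `p`. -/
def OccursAt (v T : List α) (p : ℕ) : Prop :=
  p + v.length ≤ T.length ∧ v <+: T.drop p

/-- A string is closed if it has length 1 or it has a border with no internal occurrence. -/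
def IsClosedWord (S : List α) : Prop :=
  S.length = 1 ∨ ∃ β, IsBorder β S ∧
    ∀ p, OccursAt β S p → p = 0 ∨ p = S.length - β.length

open Classical in
/-- `OCval S i = 1` if the prefix `S[1..i]` is closed, and `0` otherwise. -/
noncomputable def OCval (S : List α) (i : ℕ) : ℕ :=
  if IsClosedWord (S.take i) then 1 else 0

/-- `Parr S i` is the length of the longest prefix of `S[1..i]` having at least
two (possibly overlapping) occurrences in `S[1..i]`. -/
noncomputable def Parr (S : List α) (i : ℕ) : ℕ :=
  sSup {ℓ | ∃ p q : ℕ, p < q ∧ OccursAt (S.take ℓ) (S.take i) p ∧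
    OccursAt (S.take ℓ) (S.take i) q}

/-- `Barr S i` is the length of the longest border of `S[1..i]`. -/
noncomputable def Barr (S : List α) (i : ℕ) : ℕ :=
  sSup {ℓ | IsBorder (S.take ℓ) (S.take i)}

/-- `Bord S i` is the set of lengths of borders of `S[1..i]`. -/
def Bord (S : List α) (i : ℕ) : Set ℕ :=
  {ℓ | IsBorder (S.take ℓ) (S.take i)}

/-- The substring `S[i..j]` (1-based, inclusive). -/
def Substr (S : List α) (i j : ℕ) : List α :=
  (S.take j).drop (i - 1)

/-- `S[i..j]` is a maximal closed substring of `S`. -/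
def IsMCS (S : List α) (i j : ℕ) : Prop :=
  1 ≤ i ∧ i ≤ j ∧ j ≤ S.length ∧ IsClosedWord (Substr S i j) ∧
    (j = S.length ∨ ¬ IsClosedWord (Substr S i (j + 1))) ∧
    (i = 1 ∨ ¬ IsClosedWord (Substr S (i - 1) j))

open Classical in
/-- Number of maximal blocks of consecutive `1`s in the OC array of `S`. -/
noncomputable def ocRuns (S : List α) : ℕ :=
  ((Finset.Icc 1 S.length).filter
    (fun i => OCval S i = 1 ∧ (i = 1 ∨ OCval S (i - 1) = 0))).card

/-- The OC array of `S` as a list (1-based entries). -/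
noncomputable def ocList (S : List α) : List ℕ :=
  (List.range S.length).map (fun j => OCval S (j + 1))

lemma take_take_eq (S : List α) {b i : ℕ} (h : b ≤ i) :
    (S.take i).take b = S.take b := by
  rw [List.take_take]; congr 1; omega

lemma take_prefix_take (S : List α) {b i : ℕ} (h : b ≤ i) :
    S.take b <+: S.take i :=
  take_take_eq S h ▸ List.take_prefix b (S.take i)

/-- pointwise description of a prefix-occurrence claim. -/
lemma occursAt_iff (S : List α) {b i p : ℕ} (hb : b ≤ i) (hi : i ≤ S.length) :
    OccursAt (S.take b) (S.take i) p ↔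
      p + b ≤ i ∧ ∀ j < b, S[p + j]? = S[j]? := by
  have lb : (S.take b).length = b := by simp; omega
  have li : (S.take i).length = i := by simp; omega
  constructor
  · rintro ⟨h1, h2⟩
    rw [lb, li] at h1
    refine ⟨h1, fun j hj => ?_⟩
    rw [List.prefix_iff_eq_take] at h2
    have := congrArg (fun l => l[j]?) h2
    simp only [List.getElem?_take, lb, List.getElem?_drop] at this
    rw [if_pos hj, if_pos hj] at this
    rw [if_pos (by omega : p + j < i)] at this
    exact this.symm
  · rintro ⟨h1, h2⟩
    refine ⟨by rw [lb, li]; exact h1, ?_⟩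
    rw [List.prefix_iff_eq_take]
    apply List.ext_getElem?
    intro j
    simp only [List.getElem?_take, lb, List.getElem?_drop]
    by_cases hj : j < b
    · rw [if_pos hj, if_pos hj, if_pos (by omega : p + j < i)]
      exact (h2 j hj).symm
    · rw [if_neg hj, if_neg hj]

/-- pointwise description of "take b is a suffix of take i". -/
lemma suffix_take_iff (S : List α) {b i : ℕ} (hb : b ≤ i) (hi : i ≤ S.length) :
    (S.take b) <:+ (S.take i) ↔ ∀ j < b, S[(i - b) + j]? = S[j]? := by
  have lb : (S.take b).length = b := by simp; omega
  have li : (S.take i).length = i := by simp; omega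
  rw [List.suffix_iff_eq_drop, lb, li]
  constructor
  · intro h j hj
    have := congrArg (fun l => l[j]?) h
    simp only [List.getElem?_take, List.getElem?_drop] at this
    rw [if_pos hj, if_pos (by omega : (i - b) + j < i)] at this
    exact this.symm
  · intro h
    apply List.ext_getElem?
    intro j
    simp only [List.getElem?_take, List.getElem?_drop]
    by_cases hj : j < b
    · rw [if_pos hj, if_pos (by omega : (i - b) + j < i)]
      exact (h j hj).symm
    · rw [if_neg hj, if_neg (by omega : ¬ ((i - b) + j < i))]

/-- witness data for a closed prefix: border length `b`, with period `q = i - b`,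
    occurring in `take i` only at the two ends. -/
def Good (S : List α) (b i : ℕ) : Prop :=
  b < i ∧ i ≤ S.length ∧ (∀ j < b, S[(i - b) + j]? = S[j]?) ∧
    ∀ p, p + b ≤ i → (∀ j < b, S[p + j]? = S[j]?) → p = 0 ∨ p = i - b

lemma border_take_iff (S : List α) {b i : ℕ} (hb : b < i) (hi : i ≤ S.length) :
    IsBorder (S.take b) (S.take i) ↔ ∀ j < b, S[(i - b) + j]? = S[j]? := by
  have lb : (S.take b).length = b := by simp; omega
  have li : (S.take i).length = i := by simp; omega
  constructor
  · rintro ⟨-, -, h3⟩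
    exact (suffix_take_iff S (le_of_lt hb) hi).1 h3
  · intro h
    refine ⟨fun he => ?_, take_prefix_take S (le_of_lt hb), (suffix_take_iff S (le_of_lt hb) hi).2 h⟩
    have := congrArg List.length he
    rw [lb, li] at this; omega

lemma good_of_closed (S : List α) {i : ℕ} (h1 : 1 ≤ i) (hi : i ≤ S.length)
    (hc : IsClosedWord (S.take i)) : ∃ b, Good S b i := by
  have li : (S.take i).length = i := by simp; omega
  rcases hc with hlen | ⟨β, hbord, hocc⟩
  · rw [li] at hlen
    exact ⟨0, by omega, hi, by omega, fun p hp _ => by omega⟩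
  · obtain ⟨hne, hpre, hsuf⟩ := hbord
    obtain ⟨b, hb⟩ : ∃ b, β.length = b := ⟨_, rfl⟩
    have hblei : b ≤ i := by
      have := hpre.length_le; rwa [li, hb] at this
    have hβ : β = S.take b := by
      have h' := hpre
      rw [List.prefix_iff_eq_take] at h'
      rw [h', hb, take_take_eq S hblei]
    have hblt : b < i := by
      rcases eq_or_lt_of_le hblei with he | h
      · exact absurd (List.IsPrefix.eq_of_length hpre (by rw [li, hb]; exact he)) hne
      · exact h
    refine ⟨b, hblt, hi, ?_, ?_⟩
    · exact (border_take_iff S hblt hi).1 ⟨hβ ▸ hne, hβ ▸ hpre, hβ ▸ hsuf⟩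
    · intro p hp hm
      have := hocc p (hβ ▸ (occursAt_iff S hblei hi).2 ⟨hp, hm⟩)
      rwa [li, hb] at this

lemma not_closed_reveal (S : List α) {i b : ℕ} (hb : b < i) (hi : i ≤ S.length)
    (hnc : ¬ IsClosedWord (S.take i))
    (hbord : ∀ j < b, S[(i - b) + j]? = S[j]?) :
    ∃ p, p + b ≤ i ∧ (∀ j < b, S[p + j]? = S[j]?) ∧ p ≠ 0 ∧ p ≠ i - b := by
  have li : (S.take i).length = i := by simp; omega
  unfold IsClosedWord at hnc
  push_neg at hnc
  obtain ⟨-, h2⟩ := hnc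
  obtain ⟨p, hocc, hne⟩ := h2 (S.take b) ((border_take_iff S hb hi).2 hbord)
  obtain ⟨hp1, hp2⟩ := (occursAt_iff S (le_of_lt hb) hi).1 hocc
  rw [li] at hne
  have lb : (S.take b).length = b := by simp; omega
  rw [lb] at hne
  exact ⟨p, hp1, hp2, fun h => hne.1 h, fun h => hne.2 h⟩

/-- border lengths of closed prefixes strictly increase. -/
lemma good_mono (S : List α) {b i b' i' : ℕ} (ga : Good S b i) (gb : Good S b' i')
    (hii : i < i') : b < b' := by
  obtain ⟨hab, hai, habord, haocc⟩ := ga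
  obtain ⟨hbb, hbi, hbbord, hbocc⟩ := gb
  by_contra hle
  push_neg at hle   -- b' ≤ b
  have hm : ∀ j < b', S[(i - b) + j]? = S[j]? := fun j hj => habord j (by omega)
  have := hbocc (i - b) (by omega) hm
  omega

/-- KEY LEMMA: if `take i` is closed with data `(b, q=i-b)`, `take i'` is closed with
data `(b', q'=i'-b')`, `b < b'`, and `take (i'-1)` is NOT closed, then `q < q'` and
any border `take c` of `take b'` satisfies `c + q ≤ q'`. -/
lemma Lstar (S : List α) {b i b' i' : ℕ} (ga : Good S b i) (gb : Good S b' i')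
    (hbb : b < b') (hnc : ¬ IsClosedWord (S.take (i' - 1)))
    {c : ℕ} (hc : c < b') (hcs : ∀ j < c, S[(b' - c) + j]? = S[j]?) :
    i - b < i' - b' ∧ c + (i - b) ≤ i' - b' := by
  obtain ⟨hab, hai, habord, haocc⟩ := ga
  obtain ⟨hbb', hbi, hbbord, hbocc⟩ := gb
  have hb'1 : 1 ≤ b' := by omega
  -- reveal an internal occurrence of take (b'-1) in take (i'-1)
  obtain ⟨p, hp1, hpm, hp0, hpq⟩ := not_closed_reveal S
    (show b' - 1 < i' - 1 by omega) (by omega) hnc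
    (fun j hj => by
      have := hbbord j (by omega)
      have e : (i' - 1 - (b' - 1)) + j = (i' - b') + j := by omega
      rw [e]; exact this)
  have hpq' : p ≠ i' - b' := by
    intro h; exact hpq (by omega)
  have hple : p + (b' - 1) ≤ i' - 1 := hp1
  have hplt : p < i' - b' := by omega
  have hp1' : 1 ≤ p := by omega
  -- p ≥ i - b
  have hpgeq : i - b ≤ p := by
    by_cases hcase : p + b ≤ i
    · have := haocc p hcase (fun j hj => hpm j (by omega))
      omega
    · omega
  have hqlt : i - b < i' - b' := by omega
  refine ⟨hqlt, ?_⟩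
  by_contra hcon
  push_neg at hcon  -- i' - b' < c + (i - b)
  -- t := q' - p, 1 ≤ t ≤ q' - q < c
  have ht1 : 1 ≤ (i' - b') - p := by omega
  have htc : (i' - b') - p < c := by omega
  set t := (i' - b') - p with hts
  -- (11) the extension of the occurrence at p by one char must fail
  have ne11 : S[p + (b' - 1)]? ≠ S[b' - 1]? := by
    intro heq
    have hm : ∀ j < b', S[p + j]? = S[j]? := by
      intro j hj
      rcases lt_or_eq_of_le (show j ≤ b' - 1 by omega) with h | h
      · exact hpm j h
      · rw [h]; exact heq
    have := hbocc p (by omega) hm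
    omega
  apply ne11
  -- chain of equalities
  have e1 : S[p + (b' - 1)]? = S[(b' - 1) - t]? := by
    have := hbbord ((b' - 1) - t) (by omega)
    have e : (i' - b') + ((b' - 1) - t) = p + (b' - 1) := by omega
    rw [e] at this; exact this
  have e2 : S[(b' - 1) - t]? = S[(c - 1) - t]? := by
    have := hcs ((c - 1) - t) (by omega)
    have e : (b' - c) + ((c - 1) - t) = (b' - 1) - t := by omega
    rw [e] at this; exact this
  have e3 : S[c - 1]? = S[(c - 1) - t]? := by
    -- S[c-1]? = S[p + (c-1)]? = S[q' + (c-1-t)]? = S[c-1-t]?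
    have h1 := hpm (c - 1) (by omega)
    have h2 := hbbord ((c - 1) - t) (by omega)
    have e : (i' - b') + ((c - 1) - t) = p + (c - 1) := by omega
    rw [e] at h2
    rw [← h1, h2]
  have e4 : S[(b' - 1)]? = S[c - 1]? := by
    have := hcs (c - 1) (by omega)
    have e : (b' - c) + (c - 1) = b' - 1 := by omega
    rw [e] at this; exact this
  rw [e1, e2, ← e3, ← e4]

/-- THE quadratic-growth lemma: for three successive run starts,
`q₃ ≥ q₁ + b₂`. -/
lemma F3 (S : List α) {b1 i1 b2 i2 b3 i3 : ℕ}
    (g1 : Good S b1 i1) (g2 : Good S b2 i2) (g3 : Good S b3 i3)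
    (h12 : i1 < i2) (h23 : i2 < i3)
    (hnc2 : ¬ IsClosedWord (S.take (i2 - 1)))
    (hnc3 : ¬ IsClosedWord (S.take (i3 - 1))) :
    (i1 - b1) + b2 ≤ i3 - b3 := by
  have hb12 : b1 < b2 := good_mono S g1 g2 h12
  have hb23 : b2 < b3 := good_mono S g2 g3 h23
  have h23' := Lstar S g2 g3 hb23 hnc3 (show 0 < b3 by omega) (fun j hj => by omega)
  -- q2 < q3
  have hq23 : i2 - b2 < i3 - b3 := h23'.1
  by_cases hcase : i2 ≤ i3 - b3
  · -- easy case: q3 ≥ i2 ≥ q1 + b2  (using q1 < q2)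
    have h12' := Lstar S g1 g2 hb12 hnc2 (show 0 < b2 by omega) (fun j hj => by omega)
    have := h12'.1
    have := g2.1
    omega
  · push_neg at hcase   -- i3 - b3 < i2
    set c := i2 - (i3 - b3) with hc
    have hclt : c < b2 := by
      have := g2.1; omega
    have hcs : ∀ j < c, S[(b2 - c) + j]? = S[j]? := by
      intro j hj
      have h1 := g2.2.2.1 ((b2 - c) + j) (by omega)
      have e : (i2 - b2) + ((b2 - c) + j) = (i3 - b3) + j := by
        have := g2.1; omega
      rw [e] at h1
      have h2 := g3.2.2.1 j (by omega)
      rw [← h1, h2]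
    have := (Lstar S g1 g2 hb12 hnc2 hclt hcs).2
    have := g2.1
    omega

lemma ocval_one_iff (S : List α) (i : ℕ) :
    OCval S i = 1 ↔ IsClosedWord (S.take i) := by
  unfold OCval; split <;> simp_all

lemma ocval_zero (S : List α) {i : ℕ} (h : OCval S i = 0) :
    ¬ IsClosedWord (S.take i) := by
  intro hc; rw [(ocval_one_iff S i).2 hc] at h; omega

lemma closed_take_one (S : List α) (hn : 1 ≤ S.length) :
    IsClosedWord (S.take 1) := by
  left; simp; omega

theorem key_bound (S : List α) (hn : 1 ≤ S.length) :
    (ocRuns S - 2) ^ 2 ≤ 4 * S.length := by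
  classical
  set n := S.length with hns
  set R := ((Finset.Icc 1 n).filter
    (fun i => OCval S i = 1 ∧ (i = 1 ∨ OCval S (i - 1) = 0))) with hR
  have hRuns : ocRuns S = R.card := rfl
  set m := R.card with hm
  rcases Nat.lt_or_ge m 3 with hsmall | hbig
  · calc (m - 2)^2 ≤ 1^2 := Nat.pow_le_pow_left (by omega) 2
    _ ≤ 4 * n := by omega
  -- the order isomorphism enumerating R
  have e := R.orderIsoOfFin rfl
  set I : Fin m → ℕ := fun k => (e k : ℕ) with hI
  have hImem : ∀ k, I k ∈ R := fun k => (e k).2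
  have hImono : ∀ {k l : Fin m}, k < l → I k < I l := by
    intro k l h
    exact e.strictMono h
  have hIn : ∀ k, 1 ≤ I k ∧ I k ≤ n := by
    intro k
    have := hImem k
    rw [hR, Finset.mem_filter, Finset.mem_Icc] at this
    exact this.1
  have hIcl : ∀ k, IsClosedWord (S.take (I k)) := by
    intro k
    have := hImem k
    rw [hR, Finset.mem_filter] at this
    exact (ocval_one_iff S _).1 this.2.1
  have hInc : ∀ k : Fin m, 1 ≤ (k : ℕ) → ¬ IsClosedWord (S.take (I k - 1)) := by
    intro k hk
    have h2 : 2 ≤ I k := by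
      have h0 : I ⟨0, by omega⟩ < I k := hImono (by
        rw [Fin.lt_def]; exact hk)
      have := (hIn ⟨0, by omega⟩).1
      omega
    have := hImem k
    rw [hR, Finset.mem_filter] at this
    rcases this.2.2 with h | h
    · omega
    · exact ocval_zero S h
  -- choice of witness border data
  have hgood : ∀ k : Fin m, ∃ b, Good S b (I k) :=
    fun k => good_of_closed S (hIn k).1 (hIn k).2 (hIcl k)
  choose B hB using hgood
  -- border growth : k ≤ B k
  have hBmono : ∀ {k l : Fin m}, k < l → B k < B l :=
    fun {k l} h => good_mono S (hB k) (hB l) (hImono h)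
  have hBge : ∀ (j : ℕ) (hj : j < m), j ≤ B ⟨j, hj⟩ := by
    intro j
    induction j with
    | zero => intro hj; exact Nat.zero_le _
    | succ t ih =>
      intro hj
      have h1 := ih (by omega)
      have h2 : B ⟨t, by omega⟩ < B ⟨t + 1, hj⟩ :=
        hBmono (by exact Fin.mk_lt_mk.mpr (by omega))
      omega
  -- the recurrence
  have hrec : ∀ (j : ℕ) (hj : j + 2 < m),
      (I ⟨j, by omega⟩ - B ⟨j, by omega⟩) + B ⟨j + 1, by omega⟩ ≤
        I ⟨j + 2, hj⟩ - B ⟨j + 2, hj⟩ := by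
    intro j hj
    exact F3 S (hB ⟨j, by omega⟩) (hB ⟨j + 1, by omega⟩) (hB ⟨j + 2, hj⟩)
      (hImono (Fin.mk_lt_mk.mpr (by omega)))
      (hImono (Fin.mk_lt_mk.mpr (by omega)))
      (hInc ⟨j + 1, by omega⟩ (by simp))
      (hInc ⟨j + 2, hj⟩ (by simp))
  -- the chain : (j-1)^2 ≤ 4 * q_j
  have hchain : ∀ (j : ℕ) (hj : j < m),
      (j - 1) ^ 2 ≤ 4 * (I ⟨j, hj⟩ - B ⟨j, hj⟩) := by
    intro j
    induction j using Nat.strong_induction_on with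
    | _ j ih =>
      intro hj
      match j with
      | 0 => simp
      | 1 => simp
      | (t + 2) =>
        have h1 := ih t (by omega) (by omega)
        have h2 := hrec t hj
        have h3 := hBge (t + 1) (by omega)
        have e1 : (t + 2 - 1) ^ 2 ≤ (t - 1) ^ 2 + 4 * t + 4 := by
          rcases t with _ | u
          · norm_num
          · have e2 : u + 1 + 2 - 1 = u + 2 := by omega
            have e3 : u + 1 - 1 = u := by omega
            rw [e2, e3]
            nlinarith [sq_nonneg u]
        calc (t + 2 - 1) ^ 2 ≤ (t - 1) ^ 2 + 4 * t + 4 := e1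
          _ ≤ 4 * (I ⟨t, by omega⟩ - B ⟨t, by omega⟩) + 4 * t + 4 :=
              Nat.add_le_add_right (Nat.add_le_add_right h1 _) _
          _ ≤ 4 * (I ⟨t + 2, hj⟩ - B ⟨t + 2, hj⟩) := by omega
  -- conclude
  have hlast := hchain (m - 1) (by omega)
  have hql : I ⟨m - 1, by omega⟩ - B ⟨m - 1, by omega⟩ ≤ n := by
    have := (hIn ⟨m - 1, by omega⟩).2
    omega
  have : (m - 1 - 1) ^ 2 ≤ 4 * n := le_trans hlast (by omega)
  have e : m - 1 - 1 = m - 2 := by omega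
  rw [e] at this
  exact hRuns ▸ this

/-- The number `m` of runs of `1`s in the OC array of a string of
length `n ≥ 1` satisfies `m ≤ 2·√n + 2`. -/
theorem statement_10 {α : Type*} (S : List α) (hn : 1 ≤ S.length) :
    (ocRuns S : ℝ) ≤ 2 * Real.sqrt (S.length : ℝ) + 2 := by
  have h := key_bound S hn
  rcases le_or_gt (ocRuns S) 2 with hm | hm
  · have h1 : ((ocRuns S : ℕ) : ℝ) ≤ 2 := by exact_mod_cast hm
    have h2 : 0 ≤ Real.sqrt (S.length : ℝ) := Real.sqrt_nonneg _
    linarith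
  · have hcast : ((ocRuns S - 2 : ℕ) : ℝ) ^ 2 ≤ 4 * (S.length : ℝ) := by
      exact_mod_cast h
    have hx0 : (0:ℝ) ≤ ((ocRuns S - 2 : ℕ) : ℝ) := Nat.cast_nonneg _
    have h4 : ((ocRuns S - 2 : ℕ) : ℝ) ≤ Real.sqrt (4 * (S.length : ℝ)) := by
      rw [← Real.sqrt_sq hx0]
      exact Real.sqrt_le_sqrt hcast
    have h5 : Real.sqrt (4 * (S.length : ℝ)) = 2 * Real.sqrt (S.length : ℝ) := by
      rw [show (4:ℝ) * (S.length : ℝ) = 2 ^ 2 * (S.length : ℝ) by ring,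
        Real.sqrt_mul (by positivity), Real.sqrt_sq (by norm_num)]
    have h6 : ((ocRuns S - 2 : ℕ) : ℝ) = (ocRuns S : ℝ) - 2 := by
      have h7 : 2 ≤ ocRuns S := le_of_lt hm
      push_cast [h7]
      ring
    rw [h5] at h4
    linarith
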